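/- For every integer n ≥ 2, the Hosoya polynomial of the Mycielskian of the path P_n is H(μ(P_n), x) = (4n+1)x + (1/2)(n² + 11n − 2)x² + (n² − 2n)x³ + (1/2)(n² − 5n + 6)x⁴. -/

import Mathlib

open SimpleGraph Polynomial Finset

/-- The Mycielskian `μ(G)` of a simple graph `G`. Vertices `Sum.inl v` are the original
vertices `v_i`, vertices `Sum.inr (Sum.inl v)` are the shadow vertices `u_i`, and
`Sum.inr (Sum.inr ())` is the apex vertex `w`.  Edges: the edges of `G`, the edges `w u_i`,
and the edges `u_i v_j`, `u_j v_i` for every edge `v_i v_j` of `G`. -/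
def mycielskian {V : Type*} (G : SimpleGraph V) : SimpleGraph (V ⊕ V ⊕ Unit) :=
  SimpleGraph.fromRel (fun a b =>
    match a, b with
    | Sum.inl a, Sum.inl b => G.Adj a b
    | Sum.inl a, Sum.inr (Sum.inl b) => G.Adj a b
    | Sum.inr (Sum.inl _), Sum.inr (Sum.inr _) => True
    | _, _ => False)

/-- `distCount G k` is `d(G,k)`, the number of unordered pairs of distinct vertices of `G`
whose graph distance is exactly `k`. -/
noncomputable def distCount {V : Type*} (G : SimpleGraph V) (k : ℕ) : ℕ :=
  Nat.card {e : Sym2 V // ¬ e.IsDiag ∧ Sym2.lift ⟨G.dist, fun _ _ => G.dist_comm⟩ e = k}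

/-- The Hosoya polynomial `H(G,x) = Σ_{k=1}^{D(G)} d(G,k) x^k` (with rational coefficients). -/
noncomputable def hosoya {V : Type*} (G : SimpleGraph V) : Polynomial ℚ :=
  ∑ k ∈ Finset.Icc 1 G.diam, (distCount G k : ℚ) • Polynomial.X ^ k

/-- The Wiener index `W(G)`: the sum of distances over all unordered pairs of distinct
vertices (the diagonal contributes `0`, so we may sum over ordered pairs and halve). -/
noncomputable def wiener {V : Type*} (G : SimpleGraph V) [Fintype V] : ℚ :=
  (∑ u : V, ∑ v : V, (G.dist u v : ℚ)) / 2

/-- The Hyper-Wiener index `WW(G) = (1/2) Σ_{{u,v}} (d(u,v)² + d(u,v))`. -/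
noncomputable def hyperWiener {V : Type*} (G : SimpleGraph V) [Fintype V] : ℚ :=
  (∑ u : V, ∑ v : V, ((G.dist u v : ℚ) ^ 2 + (G.dist u v : ℚ))) / 4

/-- The TSZ index `TSZ(G) = (1/6) Σ_{{u,v}} d³ + (1/2) Σ_{{u,v}} d² + (1/3) Σ_{{u,v}} d`. -/
noncomputable def tszIndex {V : Type*} (G : SimpleGraph V) [Fintype V] : ℚ :=
  (∑ u : V, ∑ v : V, (G.dist u v : ℚ) ^ 3) / 12
    + (∑ u : V, ∑ v : V, (G.dist u v : ℚ) ^ 2) / 4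
    + (∑ u : V, ∑ v : V, (G.dist u v : ℚ)) / 6

/-- The Harary index `Har(G) = Σ_{{u,v}} 1/d(u,v)` (diagonal terms are `0⁻¹ = 0`). -/
noncomputable def harary {V : Type*} (G : SimpleGraph V) [Fintype V] : ℚ :=
  (∑ u : V, ∑ v : V, ((G.dist u v : ℚ))⁻¹) / 2

/-- The closeness `C(G) = Σ_u Σ_{v ≠ u} 2^{-d(u,v)}` over ordered pairs of distinct vertices. -/
noncomputable def closeness {V : Type*} (G : SimpleGraph V) [Fintype V] : ℚ :=
  letI := Classical.decEq V
  ∑ u : V, ∑ v : V, if v = u then 0 else ((1 : ℚ) / 2) ^ (G.dist u v)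

/-- `σ_{uv}`: the number of shortest paths (walks of length `dist u v`) from `u` to `v`. -/
noncomputable def numSP {V : Type*} (G : SimpleGraph V) (u v : V) : ℕ :=
  Nat.card {p : G.Walk u v // p.length = G.dist u v}

/-- `σ_{uv}(w)`: the number of shortest paths from `u` to `v` passing through `w`. -/
noncomputable def numSPthrough {V : Type*} (G : SimpleGraph V) (w u v : V) : ℕ :=
  Nat.card {p : G.Walk u v // p.length = G.dist u v ∧ w ∈ p.support}

/-- The betweenness centrality `B_w = Σ_{{u,v}, u ≠ w ≠ v} σ_{uv}(w)/σ_{uv}` of a vertex `w`,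
summed over unordered pairs of distinct vertices (ordered pairs, halved). -/
noncomputable def btwVertex {V : Type*} (G : SimpleGraph V) [Fintype V] (w : V) : ℚ :=
  letI := Classical.decEq V
  (∑ u : V, ∑ v : V,
    if u ≠ v ∧ u ≠ w ∧ v ≠ w then (numSPthrough G w u v : ℚ) / (numSP G u v) else 0) / 2

/-- The betweenness centrality of a graph: `B⁻(G) = (1/N) Σ_w B_w`. -/
noncomputable def btw {V : Type*} (G : SimpleGraph V) [Fintype V] : ℚ :=
  (∑ w : V, btwVertex G w) / (Fintype.card V)

/-- The star graph `S_n`: center `0` joined to the `n` leaves `1, …, n`. -/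
def starGraph (n : ℕ) : SimpleGraph (Fin (n + 1)) :=
  SimpleGraph.fromRel (fun a _ => a = 0)

/-- The join `G₁ ⊕ G₂` of two graphs on disjoint vertex sets: all edges of `G₁`, all edges
of `G₂`, and all edges between `V(G₁)` and `V(G₂)`. -/
def joinGraph {V₁ V₂ : Type*} (G₁ : SimpleGraph V₁) (G₂ : SimpleGraph V₂) :
    SimpleGraph (V₁ ⊕ V₂) :=
  SimpleGraph.fromRel (fun a b =>
    match a, b with
    | Sum.inl a, Sum.inl b => G₁.Adj a b
    | Sum.inr a, Sum.inr b => G₂.Adj a b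
    | Sum.inl _, Sum.inr _ => True
    | _, _ => False)

section Aux

variable {n : ℕ}

abbrev Vt (n : ℕ) := Fin (n+1) ⊕ Fin (n+1) ⊕ Unit
abbrev Mg (n : ℕ) := mycielskian (SimpleGraph.pathGraph (n+1))

@[reducible] def DD : Vt n → Vt n → ℕ
| .inl i, .inl j => min (Nat.dist i.val j.val) 4
| .inl i, .inr (.inl j) => if i = j then 2 else min (Nat.dist i.val j.val) 3
| .inr (.inl i), .inl j => if i = j then 2 else min (Nat.dist i.val j.val) 3
| .inr (.inl i), .inr (.inl j) => if i = j then 0 else 2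
| .inl _, .inr (.inr _) => 2
| .inr (.inr _), .inl _ => 2
| .inr (.inl _), .inr (.inr _) => 1
| .inr (.inr _), .inr (.inl _) => 1
| .inr (.inr _), .inr (.inr _) => 0

lemma adj_vv {i j : Fin (n+1)} (h : Nat.dist i.val j.val = 1) :
    (Mg n).Adj (.inl i) (.inl j) := by
  simp only [Mg, mycielskian, fromRel_adj, pathGraph_adj]
  simp only [Nat.dist] at h
  exact ⟨by simp [Fin.ext_iff]; omega, Or.inl (by omega)⟩

lemma adj_vu {i j : Fin (n+1)} (h : Nat.dist i.val j.val = 1) :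
    (Mg n).Adj (.inl i) (.inr (.inl j)) := by
  simp only [Mg, mycielskian, fromRel_adj, pathGraph_adj]
  simp only [Nat.dist] at h
  exact ⟨by simp, Or.inl (by omega)⟩

lemma adj_uw {i : Fin (n+1)} {t : Unit} : (Mg n).Adj (.inr (.inl i)) (.inr (.inr t)) := by
  simp [Mg, mycielskian, fromRel_adj]

/-- a neighbor of i on the path -/
def nb (hn : 1 ≤ n) (i : Fin (n+1)) : Fin (n+1) :=
  ⟨if i.val = 0 then 1 else i.val - 1, by have := i.isLt; split_ifs <;> omega⟩

lemma nb_dist (hn : 1 ≤ n) (i : Fin (n+1)) : Nat.dist i.val (nb hn i).val = 1 := by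
  simp only [nb, Nat.dist]
  split_ifs <;> omega

lemma walk_vv : ∀ (d : ℕ) (i j : Fin (n+1)), Nat.dist i.val j.val = d →
    ∃ w : (Mg n).Walk (.inl i) (.inl j), w.length = d := by
  intro d
  induction d with
  | zero =>
    intro i j h
    have : i = j := by simp only [Nat.dist] at h; exact Fin.ext (by omega)
    subst this; exact ⟨.nil, rfl⟩
  | succ d ih =>
    intro i j h
    have hne : i.val ≠ j.val := by simp only [Nat.dist] at h; omega
    set i' : Fin (n+1) := ⟨if i.val < j.val then i.val + 1 else i.val - 1, by
      rcases Nat.lt_or_ge i.val j.val with h1 | h1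
      · simp [h1]; omega
      · simp [Nat.not_lt.mpr h1]⟩ with hi'
    have h1 : Nat.dist i.val i'.val = 1 := by
      simp only [hi', Nat.dist]; split_ifs <;> omega
    have h2 : Nat.dist i'.val j.val = d := by
      simp only [hi', Nat.dist] at *; split_ifs <;> omega
    obtain ⟨w, hw⟩ := ih i' j h2
    exact ⟨.cons (adj_vv h1) w, by simp [hw]⟩

lemma walk_vu {i j : Fin (n+1)} (hne : i ≠ j) :
    ∃ w : (Mg n).Walk (.inl i) (.inr (.inl j)), w.length = Nat.dist i.val j.val := by
  have hne' : i.val ≠ j.val := fun h => hne (Fin.ext h)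
  set j' : Fin (n+1) := ⟨if i.val < j.val then j.val - 1 else j.val + 1, by
    rcases Nat.lt_or_ge i.val j.val with h1 | h1
    · simp [h1]
    · simp [Nat.not_lt.mpr h1]; omega⟩ with hj'
  have h1 : Nat.dist i.val j'.val = Nat.dist i.val j.val - 1 := by
    simp only [hj', Nat.dist]; split_ifs <;> omega
  have h2 : Nat.dist j'.val j.val = 1 := by
    simp only [hj', Nat.dist]; split_ifs <;> omega
  obtain ⟨w, hw⟩ := walk_vv _ i j' h1
  refine ⟨w.concat (adj_vu h2), ?_⟩
  rw [SimpleGraph.Walk.length_concat, hw]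
  simp only [Nat.dist] at *
  omega

lemma walk_vu_self (hn : 1 ≤ n) (i : Fin (n+1)) :
    ∃ w : (Mg n).Walk (.inl i) (.inr (.inl i)), w.length = 2 := by
  refine ⟨.cons (adj_vv (nb_dist hn i)) (.cons (adj_vu ?_) .nil), by simp⟩
  rw [Nat.dist_comm]; exact nb_dist hn i

lemma walk3_vu (hn : 1 ≤ n) (i j : Fin (n+1)) :
    ∃ w : (Mg n).Walk (.inl i) (.inr (.inl j)), w.length = 3 :=
  ⟨.cons (adj_vu (nb_dist hn i)) (.cons (adj_uw (t := ())) (.cons adj_uw.symm .nil)), by simp⟩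

lemma walk4_vv (hn : 1 ≤ n) (i j : Fin (n+1)) :
    ∃ w : (Mg n).Walk (.inl i) (.inl j), w.length = 4 := by
  refine ⟨.cons (adj_vu (nb_dist hn i)) (.cons (adj_uw (t := ())) (.cons adj_uw.symm
    (.cons (adj_vu (n := n) (i := j) (j := nb hn j) (nb_dist hn j)).symm .nil))), by simp⟩

lemma walk2_uu (i j : Fin (n+1)) :
    ∃ w : (Mg n).Walk (.inr (.inl i)) (.inr (.inl j)), w.length = 2 :=
  ⟨.cons (adj_uw (t := ())) (.cons adj_uw.symm .nil), by simp⟩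

lemma walk2_wv (hn : 1 ≤ n) (i : Fin (n+1)) (t : Unit) :
    ∃ w : (Mg n).Walk (.inr (.inr t)) (.inl i), w.length = 2 :=
  ⟨.cons (adj_uw (i := nb hn i)).symm (.cons (adj_vu (nb_dist hn i)).symm .nil), by simp⟩

lemma DD_self (a : Vt n) : DD a a = 0 := by
  rcases a with i | i | t <;> simp [DD]

lemma DD_comm (a b : Vt n) : DD a b = DD b a := by
  rcases a with i | i | t <;> rcases b with j | j | t' <;>
    simp [DD, Nat.dist_comm, eq_comm]

lemma DD_lip {a a' b : Vt n} (h : (Mg n).Adj a a') : DD a b ≤ DD a' b + 1 := by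
  have h' := h
  rcases a with i | i | t <;> rcases a' with i' | i' | t' <;> rcases b with j | j | tb <;>
    simp only [Mg, mycielskian, fromRel_adj, pathGraph_adj, ne_eq, Sum.inl.injEq,
      Sum.inr.injEq, reduceCtorEq, not_false_iff, true_and, false_and, and_false,
      false_or, or_false, and_true] at h' <;>
    simp only [DD] <;>
    first
    | exact h'.elim
    | (split_ifs <;> first | omega | simp_all [Fin.ext_iff, Nat.dist] <;> omega)
    | (simp_all [Fin.ext_iff, Nat.dist] <;> omega)

lemma DD_le_length : ∀ {a b : Vt n} (w : (Mg n).Walk a b), DD a b ≤ w.length := by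
  intro a b w
  induction w with
  | nil => simp [DD_self]
  | cons h p ih =>
    rw [SimpleGraph.Walk.length_cons]
    exact le_trans (DD_lip h) (by omega)

lemma reach_w (hn : 1 ≤ n) (a : Vt n) : (Mg n).Reachable a (.inr (.inr ())) := by
  rcases a with i | i | t
  · obtain ⟨w, -⟩ := walk2_wv hn i ()
    exact ⟨w.reverse⟩
  · exact ⟨.cons adj_uw .nil⟩
  · exact ⟨.nil⟩

lemma Mg_preconnected (hn : 1 ≤ n) : (Mg n).Preconnected := fun a b =>
  (reach_w hn a).trans (reach_w hn b).symm

lemma Mg_connected (hn : 1 ≤ n) : (Mg n).Connected :=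
  (SimpleGraph.connected_iff (G := Mg n)).mpr ⟨Mg_preconnected hn, ⟨.inr (.inr ())⟩⟩

lemma dist_le_DD (hn : 1 ≤ n) (a b : Vt n) : (Mg n).dist a b ≤ DD a b := by
  rcases a with i | i | t <;> rcases b with j | j | tb <;> simp only [DD]
  · -- v v
    obtain ⟨w, hw⟩ := walk_vv (n := n) _ i j rfl
    obtain ⟨w4, hw4⟩ := walk4_vv hn i j
    have h1 := SimpleGraph.dist_le w
    have h2 := SimpleGraph.dist_le w4
    omega
  · -- v u
    by_cases hij : i = j
    · subst hij
      obtain ⟨w, hw⟩ := walk_vu_self hn i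
      have h1 := SimpleGraph.dist_le w
      simp only [if_pos rfl, if_true, ite_true]
      omega
    · obtain ⟨w, hw⟩ := walk_vu hij
      obtain ⟨w3, hw3⟩ := walk3_vu hn i j
      have h1 := SimpleGraph.dist_le w
      have h2 := SimpleGraph.dist_le w3
      simp only [if_neg hij]
      omega
  · -- v w
    obtain ⟨w, hw⟩ := walk2_wv hn i tb
    have h1 := SimpleGraph.dist_le w.reverse
    simp only [SimpleGraph.Walk.length_reverse] at h1
    omega
  · -- u v
    rw [SimpleGraph.dist_comm]
    by_cases hij : i = j
    · subst hij
      obtain ⟨w, hw⟩ := walk_vu_self hn i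
      have h1 := SimpleGraph.dist_le w
      simp only [if_pos rfl, if_true, ite_true]
      omega
    · obtain ⟨w, hw⟩ := walk_vu (Ne.symm hij)
      obtain ⟨w3, hw3⟩ := walk3_vu hn j i
      have h1 := SimpleGraph.dist_le w
      have h2 := SimpleGraph.dist_le w3
      simp only [if_neg hij]
      rw [Nat.dist_comm i.val j.val]
      omega
  · -- u u
    by_cases hij : i = j
    · subst hij; simp
    · obtain ⟨w, hw⟩ := walk2_uu (n := n) i j
      have h1 := SimpleGraph.dist_le w
      simp only [if_neg hij]
      omega
  · -- u w
    have h1 := SimpleGraph.dist_le (SimpleGraph.Walk.cons (adj_uw (i := i) (t := tb)) .nil)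
    simpa using h1
  · -- w v
    obtain ⟨w, hw⟩ := walk2_wv hn j t
    have h1 := SimpleGraph.dist_le w
    omega
  · -- w u
    have h1 := SimpleGraph.dist_le (SimpleGraph.Walk.cons (adj_uw (i := j) (t := t)).symm .nil)
    simpa using h1
  · -- w w
    cases t; cases tb; simp

lemma dist_eq_DD (hn : 1 ≤ n) (a b : Vt n) : (Mg n).dist a b = DD a b := by
  refine le_antisymm (dist_le_DD hn a b) ?_
  obtain ⟨w, hw⟩ := ((Mg_preconnected hn) a b).exists_walk_length_eq_dist
  rw [← hw]
  exact DD_le_length w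


lemma two_mul_distCount {V : Type*} [Fintype V] (G : SimpleGraph V) (k : ℕ) (hk : 1 ≤ k) :
    2 * distCount G k =
      ((univ : Finset (V × V)).filter (fun p => G.dist p.1 p.2 = k)).card := by
  classical
  let Gk : SimpleGraph V :=
    { Adj := fun u v => u ≠ v ∧ G.dist u v = k
      symm := ⟨by rintro u v ⟨h1, h2⟩; exact ⟨h1.symm, by rwa [G.dist_comm]⟩⟩
      loopless := ⟨fun v h => h.1 rfl⟩ }
  have h1 : distCount G k = Gk.edgeFinset.card := by
    rw [distCount, Nat.card_eq_fintype_card, SimpleGraph.edgeFinset_card]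
    apply Fintype.card_congr
    apply Equiv.subtypeEquivRight
    intro e
    induction e using Sym2.ind with
    | _ a b =>
      simp only [Sym2.isDiag_iff_proj_eq, Sym2.lift_mk, mem_edgeSet]
      exact Iff.rfl
  have e : Gk.Dart ≃ {p : V × V // Gk.Adj p.1 p.2} :=
    ⟨fun d => ⟨d.toProd, d.adj⟩, fun p => ⟨p.1, p.2⟩,
      fun d => by cases d; rfl, fun p => by rcases p with ⟨⟨a, b⟩, h⟩; rfl⟩
  have h2 : Fintype.card Gk.Dart =
      ((univ : Finset (V × V)).filter (fun p => G.dist p.1 p.2 = k)).card := by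
    rw [Fintype.card_congr e, Fintype.card_subtype]
    congr 1
    apply Finset.filter_congr
    intro p _
    show Gk.Adj p.1 p.2 ↔ _
    constructor
    · rintro ⟨-, h⟩; exact h
    · intro h
      refine ⟨fun he => ?_, h⟩
      rw [he] at h
      rw [SimpleGraph.dist_self] at h
      omega
  rw [h1, ← h2, Gk.dart_card_eq_twice_card_edges]

lemma card_dist_eq (m d : ℕ) (hd : 1 ≤ d) :
    (((univ : Finset (Fin m × Fin m))).filter
      (fun p => Nat.dist p.1.val p.2.val = d)).card = 2 * (m - d) := by
  have h2 : ((range (m - d)) ×ˢ (range 2)).card = 2 * (m - d) := by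
    simp [mul_comm]
  rw [← h2]
  refine Finset.card_bij'
    (fun p _ => ((if p.1.val ≤ p.2.val then p.1.val else p.2.val : ℕ), (if p.1.val < p.2.val then 0 else 1 : ℕ)))
    (fun q hq =>
      ((⟨if q.2 = 0 then q.1 else q.1 + d, by
          simp only [Finset.mem_product, Finset.mem_range] at hq
          split_ifs <;> omega⟩ : Fin m),
       (⟨if q.2 = 0 then q.1 + d else q.1, by
          simp only [Finset.mem_product, Finset.mem_range] at hq
          split_ifs <;> omega⟩ : Fin m)))
    ?_ ?_ ?_ ?_
  · rintro ⟨a, b⟩ hp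
    simp only [Finset.mem_filter, Finset.mem_univ, true_and] at hp
    simp only [Nat.dist] at hp
    have ha := a.isLt
    have hb := b.isLt
    simp only [Finset.mem_product, Finset.mem_range]
    constructor
    · split_ifs <;> omega
    · split_ifs <;> omega
  · rintro ⟨q1, q2⟩ hq
    simp only [Finset.mem_product, Finset.mem_range] at hq
    simp only [Finset.mem_filter, Finset.mem_univ, true_and]
    simp only [Nat.dist]
    split_ifs <;> omega
  · rintro ⟨a, b⟩ hp
    simp only [Finset.mem_filter, Finset.mem_univ, true_and] at hp
    simp only [Nat.dist] at hp
    simp only [Prod.mk.injEq, Fin.ext_iff]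
    constructor <;> (split_ifs <;> first | omega | simp_all)
  · rintro ⟨q1, q2⟩ hq
    simp only [Finset.mem_product, Finset.mem_range] at hq
    simp only [Prod.mk.injEq]
    constructor <;> (split_ifs <;> omega)

lemma gauss_sum (m d : ℕ) : ∑ e ∈ Icc d m, 2 * (m - e) = (m - d) * (m + 1 - d) := by
  rcases Nat.lt_or_ge m d with h | h
  · rw [Finset.Icc_eq_empty (by omega)]
    simp [Nat.sub_eq_zero_of_le (le_of_lt h)]
  · have : Icc d m = Ico d (m + 1) := by rw [Finset.Ico_add_one_right_eq_Icc]
    rw [this, Finset.sum_Ico_eq_sum_range]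
    have hK : m + 1 - d = (m - d) + 1 := by omega
    rw [hK]
    set K := m - d with hKdef
    have step1 : ∀ i ∈ range (K + 1), 2 * (m - (d + i)) = 2 * (K - i) := by
      intro i hi; omega
    rw [Finset.sum_congr rfl step1, ← Finset.mul_sum]
    have step2 : ∑ i ∈ range (K + 1), (K - i) = ∑ i ∈ range (K + 1), i := by
      have := Finset.sum_range_reflect (fun j => j) (K + 1)
      rw [← this]
      exact Finset.sum_congr rfl (fun i hi => by simp at hi; omega)
    rw [step2]
    have h5 := Finset.sum_range_id_mul_two (K + 1)
    simp only [Nat.add_sub_cancel] at h5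
    rw [mul_comm (K+1) K] at h5
    omega

lemma card_dist_ge (m d : ℕ) (hd : 1 ≤ d) :
    (((univ : Finset (Fin m × Fin m))).filter
      (fun p => d ≤ Nat.dist p.1.val p.2.val)).card = (m - d) * (m + 1 - d) := by
  classical
  rw [Finset.card_filter]
  have hpt : ∀ p : Fin m × Fin m, (if d ≤ Nat.dist p.1.val p.2.val then (1:ℕ) else 0)
      = ∑ e ∈ Icc d m, (if Nat.dist p.1.val p.2.val = e then 1 else 0) := by
    intro p
    rw [Finset.sum_ite_eq (Icc d m) (Nat.dist p.1.val p.2.val) (fun _ => (1:ℕ))]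
    have h1 := p.1.isLt
    have h2 := p.2.isLt
    have : Nat.dist p.1.val p.2.val ≤ m := by simp only [Nat.dist]; omega
    by_cases h : d ≤ Nat.dist p.1.val p.2.val <;> simp [Finset.mem_Icc, h, this]
  rw [Finset.sum_congr rfl (fun p _ => hpt p), Finset.sum_comm]
  have : ∀ e ∈ Icc d m, (∑ p : Fin m × Fin m, if Nat.dist p.1.val p.2.val = e then (1:ℕ) else 0)
      = 2 * (m - e) := by
    intro e he
    simp only [Finset.mem_Icc] at he
    rw [← Finset.card_filter]
    exact card_dist_eq m e (by omega)
  rw [Finset.sum_congr rfl this, gauss_sum]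


lemma L1 (m d : ℕ) (hd : 1 ≤ d) :
    ∑ i : Fin m, ∑ j : Fin m, (if Nat.dist i.val j.val = d then (1:ℕ) else 0)
      = 2 * (m - d) := by
  have h := card_dist_eq m d hd
  rw [Finset.card_filter] at h
  rw [← h, Fintype.sum_prod_type]

lemma L2 (m d : ℕ) (hd : 1 ≤ d) :
    ∑ i : Fin m, ∑ j : Fin m, (if d ≤ Nat.dist i.val j.val then (1:ℕ) else 0)
      = (m - d) * (m + 1 - d) := by
  have h := card_dist_ge m d hd
  rw [Finset.card_filter] at h
  rw [← h, Fintype.sum_prod_type]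

lemma L3 (m : ℕ) : ∑ i : Fin m, ∑ j : Fin m, (if i = j then (1:ℕ) else 0) = m := by
  simp [Finset.sum_ite_eq]

lemma L4 (m : ℕ) : ∑ i : Fin m, ∑ j : Fin m, (if i = j then (0:ℕ) else 1) = m * m - m := by
  have h1 : ∀ i j : Fin m, (if i = j then (0:ℕ) else 1) + (if i = j then 1 else 0) = 1 := by
    intro i j; split_ifs <;> simp
  have h2 : ∑ i : Fin m, ∑ j : Fin m,
      ((if i = j then (0:ℕ) else 1) + (if i = j then 1 else 0)) = m * m := by
    simp only [h1]
    simp [Finset.card_univ, mul_comm]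
  simp only [Finset.sum_add_distrib] at h2
  have h3 := L3 m
  omega

lemma NN_eq (hn : 1 ≤ n) (k : ℕ) :
    ((univ : Finset (Vt n × Vt n)).filter (fun p => (Mg n).dist p.1 p.2 = k)).card
      = ∑ a : Vt n, ∑ b : Vt n, (if DD a b = k then (1:ℕ) else 0) := by
  rw [Finset.card_filter, Fintype.sum_prod_type]
  exact Finset.sum_congr rfl fun a _ => Finset.sum_congr rfl fun b _ => by
    rw [dist_eq_DD hn]

lemma z0 (k : ℕ) (h : k ≠ 0) : (if (0:ℕ) = k then (1:ℕ) else 0) = 0 := by simp [Ne.symm h]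
lemma z1a : (if (1:ℕ) = 1 then (1:ℕ) else 0) = 1 := by norm_num
lemma z1b (k : ℕ) (h : k ≠ 1) : (if (1:ℕ) = k then (1:ℕ) else 0) = 0 := by simp [Ne.symm h]
lemma z2a : (if (2:ℕ) = 2 then (1:ℕ) else 0) = 1 := by norm_num
lemma z2b (k : ℕ) (h : k ≠ 2) : (if (2:ℕ) = k then (1:ℕ) else 0) = 0 := by simp [Ne.symm h]

lemma NN1 (hn : 1 ≤ n) :
    ((univ : Finset (Vt n × Vt n)).filter (fun p => (Mg n).dist p.1 p.2 = 1)).card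
      = 8 * n + 2 := by
  rw [NN_eq hn 1]
  simp only [Fintype.sum_sum_type, DD, Fintype.sum_unique]
  have c1 : ∀ i j : Fin (n+1), (if min (Nat.dist i.val j.val) 4 = 1 then (1:ℕ) else 0)
      = (if Nat.dist i.val j.val = 1 then 1 else 0) := by
    intro i j; congr 1; apply propext; omega
  have c2 : ∀ i j : Fin (n+1),
      (if (if i = j then 2 else min (Nat.dist i.val j.val) 3) = 1 then (1:ℕ) else 0)
      = (if Nat.dist i.val j.val = 1 then 1 else 0) := by
    intro i j
    rcases eq_or_ne i j with h | h
    · subst h; simp [Nat.dist_self]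
    · rw [if_neg h]; congr 1; apply propext; omega
  have c3 : ∀ i j : Fin (n+1),
      (if (if i = j then 0 else 2) = 1 then (1:ℕ) else 0) = 0 := by
    intro i j; split_ifs <;> first | omega | simp_all
  simp only [c1, c2, c3, z0 1 (by omega), z1a, z2b 1 (by omega)]
  simp only [Finset.sum_add_distrib, L1 (n+1) 1 le_rfl]
  simp only [Finset.sum_const_zero, Finset.sum_const, Finset.card_univ, Fintype.card_fin,
    smul_eq_mul, add_zero, zero_add, mul_one, mul_zero, if_true]
  omega

lemma NN2 (hn : 1 ≤ n) :
    ((univ : Finset (Vt n × Vt n)).filter (fun p => (Mg n).dist p.1 p.2 = 2)).card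
      = n * n + 11 * n - 2 := by
  rw [NN_eq hn 2]
  simp only [Fintype.sum_sum_type, DD, Fintype.sum_unique]
  have c1 : ∀ i j : Fin (n+1), (if min (Nat.dist i.val j.val) 4 = 2 then (1:ℕ) else 0)
      = (if Nat.dist i.val j.val = 2 then 1 else 0) := by
    intro i j; congr 1; apply propext; omega
  have c2 : ∀ i j : Fin (n+1),
      (if (if i = j then 2 else min (Nat.dist i.val j.val) 3) = 2 then (1:ℕ) else 0)
      = (if i = j then 1 else 0) + (if Nat.dist i.val j.val = 2 then 1 else 0) := by
    intro i j
    rcases eq_or_ne i j with h | h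
    · subst h; simp [Nat.dist_self]
    · rw [if_neg h, if_neg h]
      split_ifs <;> omega
  have c3 : ∀ i j : Fin (n+1),
      (if (if i = j then 0 else 2) = 2 then (1:ℕ) else 0) = (if i = j then 0 else 1) := by
    intro i j; split_ifs <;> first | omega | simp_all
  simp only [c1, c2, c3, z0 2 (by omega), z1b 2 (by omega), z2a]
  simp only [Finset.sum_add_distrib, L1 (n+1) 2 (by omega), L3, L4]
  simp only [Finset.sum_const_zero, Finset.sum_const, Finset.card_univ, Fintype.card_fin,
    smul_eq_mul, add_zero, zero_add, mul_one, mul_zero, if_true]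
  have h4 : (n+1) * (n+1) = n*n + 2*n + 1 := by ring
  omega

lemma NN3 (hn : 1 ≤ n) :
    ((univ : Finset (Vt n × Vt n)).filter (fun p => (Mg n).dist p.1 p.2 = 3)).card
      = 2 * (n - 2) + 2 * ((n - 2) * (n - 1)) := by
  rw [NN_eq hn 3]
  simp only [Fintype.sum_sum_type, DD, Fintype.sum_unique]
  have c1 : ∀ i j : Fin (n+1), (if min (Nat.dist i.val j.val) 4 = 3 then (1:ℕ) else 0)
      = (if Nat.dist i.val j.val = 3 then 1 else 0) := by
    intro i j; congr 1; apply propext; omega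
  have c2 : ∀ i j : Fin (n+1),
      (if (if i = j then 2 else min (Nat.dist i.val j.val) 3) = 3 then (1:ℕ) else 0)
      = (if 3 ≤ Nat.dist i.val j.val then 1 else 0) := by
    intro i j
    rcases eq_or_ne i j with h | h
    · subst h; simp [Nat.dist_self]
    · rw [if_neg h]; congr 1; apply propext; omega
  have c3 : ∀ i j : Fin (n+1),
      (if (if i = j then 0 else 2) = 3 then (1:ℕ) else 0) = 0 := by
    intro i j; split_ifs <;> first | omega | simp_all
  simp only [c1, c2, c3, z0 3 (by omega), z1b 3 (by omega), z2b 3 (by omega)]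
  simp only [Finset.sum_add_distrib, L1 (n+1) 3 (by omega), L2 (n+1) 3 (by omega)]
  simp only [Finset.sum_const_zero, Finset.sum_const, Finset.card_univ, Fintype.card_fin,
    smul_eq_mul, add_zero, zero_add, mul_one, mul_zero, if_true]
  have e1 : n + 1 - 3 = n - 2 := by omega
  have e2 : n + 1 + 1 - 3 = n - 1 := by omega
  rw [e1, e2]
  omega

lemma NN4 (hn : 1 ≤ n) :
    ((univ : Finset (Vt n × Vt n)).filter (fun p => (Mg n).dist p.1 p.2 = 4)).card
      = (n - 3) * (n - 2) := by
  rw [NN_eq hn 4]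
  simp only [Fintype.sum_sum_type, DD, Fintype.sum_unique]
  have c1 : ∀ i j : Fin (n+1), (if min (Nat.dist i.val j.val) 4 = 4 then (1:ℕ) else 0)
      = (if 4 ≤ Nat.dist i.val j.val then 1 else 0) := by
    intro i j; congr 1; apply propext; omega
  have c2 : ∀ i j : Fin (n+1),
      (if (if i = j then 2 else min (Nat.dist i.val j.val) 3) = 4 then (1:ℕ) else 0)
      = 0 := by
    intro i j; split_ifs <;> first | omega | simp_all
  have c3 : ∀ i j : Fin (n+1),
      (if (if i = j then 0 else 2) = 4 then (1:ℕ) else 0) = 0 := by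
    intro i j; split_ifs <;> first | omega | simp_all
  simp only [c1, c2, c3, z0 4 (by omega), z1b 4 (by omega), z2b 4 (by omega)]
  simp only [Finset.sum_add_distrib, L2 (n+1) 4 (by omega)]
  simp only [Finset.sum_const_zero, Finset.sum_const, Finset.card_univ, Fintype.card_fin,
    smul_eq_mul, add_zero, zero_add, mul_one, mul_zero, if_true]
  have e1 : n + 1 - 4 = n - 3 := by omega
  have e2 : n + 1 + 1 - 4 = n - 2 := by omega
  rw [e1, e2]

lemma walk_le4 (hn : 1 ≤ n) (a b : Vt n) : ∃ w : (Mg n).Walk a b, w.length ≤ 4 := by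
  rcases a with i | i | t <;> rcases b with j | j | tb
  · obtain ⟨w, hw⟩ := walk4_vv hn i j; exact ⟨w, by omega⟩
  · obtain ⟨w, hw⟩ := walk3_vu hn i j; exact ⟨w, by omega⟩
  · obtain ⟨w, hw⟩ := walk2_wv hn i tb; exact ⟨w.reverse, by simp [hw]⟩
  · obtain ⟨w, hw⟩ := walk3_vu hn j i; exact ⟨w.reverse, by simp [hw]⟩
  · obtain ⟨w, hw⟩ := walk2_uu (n := n) i j; exact ⟨w, by omega⟩
  · exact ⟨.cons adj_uw .nil, by simp⟩
  · obtain ⟨w, hw⟩ := walk2_wv hn j t; exact ⟨w, by omega⟩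
  · exact ⟨.cons adj_uw.symm .nil, by simp⟩
  · exact ⟨.nil, by simp⟩

lemma ediam_le4 (hn : 1 ≤ n) : (Mg n).ediam ≤ 4 := by
  apply SimpleGraph.ediam_le_of_edist_le
  intro a b
  obtain ⟨w, hw⟩ := walk_le4 hn a b
  exact le_trans (SimpleGraph.edist_le w) (by exact_mod_cast hw)

lemma diam_le4 (hn : 1 ≤ n) : (Mg n).diam ≤ 4 := by
  have h := ENat.toNat_le_toNat (ediam_le4 hn) (by simp : (4 : ℕ∞) ≠ ⊤)
  simpa [SimpleGraph.diam] using h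

lemma distCount_eq_zero (hn : 1 ≤ n) {k : ℕ} (hk : (Mg n).diam < k) :
    distCount (Mg n) k = 0 := by
  have hne : (Mg n).ediam ≠ ⊤ := ne_top_of_le_ne_top (by simp) (ediam_le4 hn)
  rw [distCount]
  rw [Nat.card_eq_zero]
  left
  rw [isEmpty_subtype]
  intro e
  induction e using Sym2.ind with
  | _ a b =>
    rintro ⟨-, hl⟩
    rw [Sym2.lift_mk] at hl
    have hl' : (Mg n).dist a b = k := hl
    have := SimpleGraph.dist_le_diam (G := Mg n) hne (u := a) (v := b)
    omega

end Aux

/-- For `n ≥ 2`, the path `P_n` (on `n+1` vertices) satisfies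
`H(μ(P_n), x) = (4n+1)x + (1/2)(n²+11n-2)x² + (n²-2n)x³ + (1/2)(n²-5n+6)x⁴`. -/
theorem stmt_13 (n : ℕ) (hn : 2 ≤ n) :
    hosoya (mycielskian (SimpleGraph.pathGraph (n + 1))) =
      Polynomial.C ((4 * n + 1 : ℕ) : ℚ) * Polynomial.X +
        Polynomial.C (((n : ℚ) ^ 2 + 11 * n - 2) / 2) * Polynomial.X ^ 2 +
        Polynomial.C ((n : ℚ) ^ 2 - 2 * n) * Polynomial.X ^ 3 +
        Polynomial.C (((n : ℚ) ^ 2 - 5 * n + 6) / 2) * Polynomial.X ^ 4 := by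
  have h1 : (1:ℕ) ≤ n := by omega
  have hd1 : 2 * distCount (Mg n) 1 = 8 * n + 2 := by
    rw [two_mul_distCount _ 1 le_rfl, NN1 h1]
  have hd2 : 2 * distCount (Mg n) 2 = n * n + 11 * n - 2 := by
    rw [two_mul_distCount _ 2 (by omega), NN2 h1]
  have hd3 : 2 * distCount (Mg n) 3 = 2 * (n - 2) + 2 * ((n - 2) * (n - 1)) := by
    rw [two_mul_distCount _ 3 (by omega), NN3 h1]
  have hd4 : 2 * distCount (Mg n) 4 = (n - 3) * (n - 2) := by
    rw [two_mul_distCount _ 4 (by omega), NN4 h1]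
  have q1 : (distCount (Mg n) 1 : ℚ) = ((4 * n + 1 : ℕ) : ℚ) := by
    have h : distCount (Mg n) 1 = 4 * n + 1 := by omega
    exact_mod_cast congrArg (fun x : ℕ => (x : ℚ)) h
  have q2 : (distCount (Mg n) 2 : ℚ) = ((n:ℚ)^2 + 11 * n - 2) / 2 := by
    have h : ((2 * distCount (Mg n) 2 : ℕ) : ℚ) = ((n * n + 11 * n - 2 : ℕ) : ℚ) := by
      exact_mod_cast congrArg (fun x : ℕ => (x : ℚ)) hd2
    rw [Nat.cast_sub (by nlinarith)] at h
    push_cast at h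
    rw [eq_div_iff (by norm_num)]
    nlinarith [h]
  have q3 : (distCount (Mg n) 3 : ℚ) = (n:ℚ)^2 - 2 * n := by
    have h : distCount (Mg n) 3 = (n - 2) + (n - 2) * (n - 1) := by omega
    have h' := congrArg (fun x : ℕ => (x : ℚ)) h
    rw [h']
    rw [Nat.cast_add, Nat.cast_mul, Nat.cast_sub hn, Nat.cast_sub h1]
    push_cast
    ring
  have q4 : (distCount (Mg n) 4 : ℚ) = ((n:ℚ)^2 - 5 * n + 6) / 2 := by
    have h : ((2 * distCount (Mg n) 4 : ℕ) : ℚ) = (((n - 3) * (n - 2) : ℕ) : ℚ) := by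
      exact_mod_cast congrArg (fun x : ℕ => (x : ℚ)) hd4
    have key : (((n - 3) * (n - 2) : ℕ) : ℚ) = (n:ℚ)^2 - 5 * n + 6 := by
      rcases Nat.lt_or_ge n 3 with h3 | h3
      · have hn2 : n = 2 := by omega
        subst hn2; norm_num
      · rw [Nat.cast_mul, Nat.cast_sub h3, Nat.cast_sub hn]
        push_cast
        ring
    rw [key] at h
    push_cast at h
    rw [eq_div_iff (by norm_num)]
    linarith [h]
  simp only [hosoya]
  have hsub : Finset.Icc 1 (mycielskian (SimpleGraph.pathGraph (n+1))).diam ⊆ Finset.Icc 1 4 :=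
    Finset.Icc_subset_Icc le_rfl (diam_le4 h1)
  rw [Finset.sum_subset hsub (fun k hk4 hkd => by
    have hdk : (mycielskian (SimpleGraph.pathGraph (n+1))).diam < k := by
      simp only [Finset.mem_Icc] at hk4 hkd
      omega
    rw [distCount_eq_zero h1 hdk]
    simp)]
  rw [show (Finset.Icc 1 4 : Finset ℕ) = {1, 2, 3, 4} from rfl]
  rw [Finset.sum_insert (by decide), Finset.sum_insert (by decide),
    Finset.sum_insert (by decide), Finset.sum_singleton]
  rw [q1, q2, q3, q4]
  rw [Polynomial.smul_eq_C_mul, Polynomial.smul_eq_C_mul, Polynomial.smul_eq_C_mul,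
    Polynomial.smul_eq_C_mul]
  ring
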